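/- Let 0 < a < b and let X₁, X₂ ∈ ℝⁿ be points with ‖X₁‖, ‖X₂‖ ∈ [a,b]. If ‖X₂ − X₁‖ > 2√(b² − a²), then the closed line segment connecting X₁ and X₂ intersects the closed ball B_a = {x ∈ ℝⁿ : ‖x‖ ≤ a}. -/

import Mathlib

open Metric

lemma arith_aux (P s N a b : ℝ) (hPa : a ^ 2 ≤ P) (hPb : P ≤ b ^ 2)
    (hQb : P + 2 * s + N ≤ b ^ 2) (hkey : 4 * (b ^ 2 - a ^ 2) < N)
    (hNpos : 0 < N) (hsneg : s ≤ 0) (hsN : 0 ≤ s + N) :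
    (P - a ^ 2) * N ≤ s ^ 2 := by
  nlinarith [sq_nonneg (2 * s + N), mul_nonneg (sub_nonneg.2 hPb) hNpos.le,
    mul_lt_mul_of_pos_right hkey hNpos,
    mul_le_mul_of_nonneg_right hQb hNpos.le, sq_nonneg s,
    mul_nonneg (neg_nonneg.2 hsneg) hsN]

/-- **If two points in a spherical shell are far apart, the segment between them meets the inner
ball.** Let `0 < a < b` and let `X₁, X₂ ∈ ℝⁿ` with `‖X₁‖, ‖X₂‖ ∈ [a,b]`. If
`‖X₂ − X₁‖ > 2√(b² − a²)`, then the closed line segment connecting `X₁` and `X₂` intersects the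
closed ball `B_a = {x : ‖x‖ ≤ a}`. -/
theorem segment_meets_ball
    (n : ℕ) (a b : ℝ) (ha : 0 < a) (hab : a < b)
    (X₁ X₂ : EuclideanSpace ℝ (Fin n))
    (hX₁ : ‖X₁‖ ∈ Set.Icc a b) (hX₂ : ‖X₂‖ ∈ Set.Icc a b)
    (hfar : 2 * Real.sqrt (b ^ 2 - a ^ 2) < ‖X₂ - X₁‖) :
    (segment ℝ X₁ X₂ ∩ closedBall (0 : EuclideanSpace ℝ (Fin n)) a).Nonempty := by
  obtain ⟨ha1, hb1⟩ := hX₁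
  obtain ⟨ha2, hb2⟩ := hX₂
  obtain ⟨u, hu⟩ : ∃ u : EuclideanSpace ℝ (Fin n), u = X₂ - X₁ := ⟨_, rfl⟩
  rw [← hu] at hfar
  have hba : (0:ℝ) ≤ b ^ 2 - a ^ 2 := by nlinarith
  have hsq : Real.sqrt (b ^ 2 - a ^ 2) ^ 2 = b ^ 2 - a ^ 2 := Real.sq_sqrt hba
  have hupos : 0 < ‖u‖ := lt_of_le_of_lt (by positivity) hfar
  have hkey0 : 4 * (b ^ 2 - a ^ 2) < ‖u‖ ^ 2 := by nlinarith [Real.sqrt_nonneg (b ^ 2 - a ^ 2)]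
  obtain ⟨s, hs⟩ : ∃ s : ℝ, (inner ℝ X₁ u : ℝ) = s := ⟨_, rfl⟩
  obtain ⟨N, hNeq⟩ : ∃ N : ℝ, ‖u‖ ^ 2 = N := ⟨_, rfl⟩
  have hNpos : 0 < N := hNeq ▸ pow_pos hupos 2
  have hkey : 4 * (b ^ 2 - a ^ 2) < N := hNeq ▸ hkey0
  have hX₂eq : X₂ = X₁ + u := by rw [hu]; abel
  have hQ : ‖X₂‖ ^ 2 = ‖X₁‖ ^ 2 + 2 * s + N := by
    rw [hX₂eq, norm_add_sq_real, hs, hNeq]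
  have hPa : a ^ 2 ≤ ‖X₁‖ ^ 2 := by nlinarith [norm_nonneg X₁]
  have hPb : ‖X₁‖ ^ 2 ≤ b ^ 2 := by nlinarith [norm_nonneg X₁]
  have hQa : a ^ 2 ≤ ‖X₂‖ ^ 2 := by nlinarith [norm_nonneg X₂]
  have hQb : ‖X₂‖ ^ 2 ≤ b ^ 2 := by nlinarith [norm_nonneg X₂]
  have hsneg : s ≤ 0 := by linarith
  have hsN : 0 ≤ s + N := by
    have hX₁eq : X₁ = X₂ - u := by rw [hu]; abel
    have hP : ‖X₁‖ ^ 2 = ‖X₂‖ ^ 2 - 2 * (s + N) + N := by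
      rw [hX₁eq, norm_sub_sq_real]
      have : (inner ℝ X₂ u : ℝ) = s + N := by
        rw [hX₂eq, inner_add_left, hs, real_inner_self_eq_norm_sq, hNeq]
      rw [this, hNeq]
    linarith
  set t : ℝ := -s / N with ht
  have ht0 : 0 ≤ t := div_nonneg (by linarith) hNpos.le
  have ht1 : t ≤ 1 := by rw [ht, div_le_one hNpos]; linarith
  refine ⟨X₁ + t • u, ⟨1 - t, t, by linarith, ht0, by ring, ?_⟩, ?_⟩
  · rw [hu]; module
  · rw [mem_closedBall, dist_zero_right]
    have hnorm : ‖X₁ + t • u‖ ^ 2 = ‖X₁‖ ^ 2 + 2 * (t * s) + t ^ 2 * N := by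
      rw [norm_add_sq_real, real_inner_smul_right, norm_smul, Real.norm_eq_abs,
        mul_pow, sq_abs, hs, hNeq]
    have hcomb : ‖X₁‖ ^ 2 + 2 * (t * s) + t ^ 2 * N = ‖X₁‖ ^ 2 - s ^ 2 / N := by
      rw [ht]; field_simp; ring
    have hgoal : (‖X₁‖ ^ 2 - a ^ 2) * N ≤ s ^ 2 :=
      arith_aux _ _ _ _ _ hPa hPb (by linarith) hkey hNpos hsneg hsN
    have h2 : ‖X₁‖ ^ 2 - a ^ 2 ≤ s ^ 2 / N := (le_div_iff₀ hNpos).mpr hgoal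
    have hle : ‖X₁ + t • u‖ ^ 2 ≤ a ^ 2 := by rw [hnorm, hcomb]; linarith
    have h := Real.sqrt_le_sqrt hle
    rwa [Real.sqrt_sq (norm_nonneg _), Real.sqrt_sq ha.le] at h
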